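/- Let τ_n = min{ i ∈ {0,...,n} : S_i = min_{0≤j≤n} S_j } be the first time the minimum of S_0,...,S_n is attained. For each fixed i ∈ ℕ, each k with 0 ≤ k ≤ n − i, and each Borel set A ⊆ ℝ, one has P(S_{τ_n + i} − S_{τ_n} ∈ A, τ_n = k) = P(S_i ∈ A | L_{n−k} ≥ 0) · P(τ_n = k), where L_m = min_{0≤j≤m} S_j. -/

import Mathlib

open MeasureTheory ProbabilityTheory Filter

lemma map_tuple_pi {Ω : Type*} [MeasureSpace Ω] [IsProbabilityMeasure (ℙ : Measure Ω)]
    (X : ℕ → Ω → ℝ) (hmeas : ∀ i, Measurable (X i))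
    (hindep : iIndepFun X ℙ)
    (hident : ∀ i, Measure.map (X i) ℙ = Measure.map (X 0) ℙ)
    (N : ℕ) (e : ℕ → ℕ) (he : Function.Injective e) :
    Measure.map (fun ω (j : Fin N) => X (e j) ω) ℙ
      = Measure.pi (fun _ : Fin N => Measure.map (X 0) ℙ) := by
  classical
  have hprob : IsProbabilityMeasure (Measure.map (X 0) ℙ) :=
    Measure.isProbabilityMeasure_map (hmeas 0).aemeasurable
  have hg : Measurable (fun ω (j : Fin N) => X (e j) ω) :=
    measurable_pi_lambda _ (fun j => hmeas (e j))
  refine (Measure.pi_eq fun s hs => ?_).symm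
  rw [Measure.map_apply hg (MeasurableSet.univ_pi hs)]
  set sets : ℕ → Set ℝ := fun m => if h : ∃ j : Fin N, e j = m then s h.choose else Set.univ
    with hsetsdef
  have hsets : ∀ j : Fin N, sets (e j) = s j := by
    intro j
    have h : ∃ j' : Fin N, e j' = e j := ⟨j, rfl⟩
    simp only [hsetsdef, dif_pos h]
    exact congrArg s (Fin.val_injective (he h.choose_spec))
  have hsetsm : ∀ m, MeasurableSet (sets m) := by
    intro m
    simp only [hsetsdef]
    split
    · exact hs _
    · exact MeasurableSet.univ
  set T : Finset ℕ := Finset.image (fun j : Fin N => e j) Finset.univ with hT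
  have hpre : (fun ω (j : Fin N) => X (e j) ω) ⁻¹' Set.pi Set.univ s
      = ⋂ m ∈ T, X m ⁻¹' sets m := by
    ext ω
    simp only [Set.mem_preimage, Set.mem_pi, Set.mem_univ, true_implies, Set.mem_iInter,
      Finset.mem_image, Finset.mem_univ, true_and, hT]
    constructor
    · rintro h m ⟨j, rfl⟩
      rw [hsets]; exact h j
    · intro h j
      have := h (e j) ⟨j, rfl⟩
      rwa [hsets] at this
  rw [hpre, hindep.measure_inter_preimage_eq_mul T (fun m _ => hsetsm m)]
  rw [hT, Finset.prod_image (fun j _ j' _ h => Fin.val_injective (he h))]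
  rw [Finset.prod_congr rfl (fun j _ => by rw [hsets])]
  refine Finset.prod_congr rfl (fun j _ => ?_)
  rw [← hident (e j), Measure.map_apply (hmeas (e j)) (hs j)]

set_option maxHeartbeats 2000000 in
theorem stmt1 {Ω : Type*} [MeasureSpace Ω] [IsProbabilityMeasure (ℙ : Measure Ω)]
    (X : ℕ → Ω → ℝ) (hmeas : ∀ i, Measurable (X i))
    (hindep : iIndepFun X ℙ)
    (hident : ∀ i, Measure.map (X i) ℙ = Measure.map (X 0) ℙ)
    (S L : ℕ → Ω → ℝ) (τ : ℕ → Ω → ℕ)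
    (hS : ∀ n ω, S n ω = ∑ i ∈ Finset.range n, X i ω)
    (hL : ∀ n ω, L n ω = (Finset.range (n+1)).inf' Finset.nonempty_range_add_one
      (fun j => S j ω))
    (hτ : ∀ n ω, τ n ω = sInf {i | i ≤ n ∧ S i ω = L n ω})
    (i k n : ℕ) (hin : i ≤ n) (hk : k ≤ n - i)
    (hpos : 0 < ℙ {ω | 0 ≤ L (n - k) ω})
    (A : Set ℝ) (hA : MeasurableSet A) :
    ℙ {ω | S (τ n ω + i) ω - S (τ n ω) ω ∈ A ∧ τ n ω = k}
      = (ℙ[|{ω | 0 ≤ L (n - k) ω}]) {ω | S i ω ∈ A} * ℙ {ω | τ n ω = k} := by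
  classical
  have hkn : k ≤ n := le_trans hk (Nat.sub_le n i)
  set N := n - k with hN
  have hiN : i ≤ N := by omega
  have hkN : k + N = n := by omega
  -- difference of partial sums
  have hsub : ∀ (ω : Ω) (a b : ℕ), a ≤ b → S b ω - S a ω = ∑ m ∈ Finset.Ico a b, X m ω := by
    intro ω a b hab
    rw [hS, hS]
    exact (Finset.sum_Ico_eq_sub _ hab).symm
  -- the three tuple maps
  set g1 : Ω → (Fin k → ℝ) := fun ω j => X j ω with hg1
  set g2 : Ω → (Fin N → ℝ) := fun ω j => X (k + j) ω with hg2
  set g0 : Ω → (Fin N → ℝ) := fun ω j => X j ω with hg0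
  have hg1m : Measurable g1 := measurable_pi_lambda _ fun j => hmeas j
  have hg2m : Measurable g2 := measurable_pi_lambda _ fun j => hmeas (k + j)
  have hg0m : Measurable g0 := measurable_pi_lambda _ fun j => hmeas j
  -- the target sets in sequence space
  set B' : Set (Fin k → ℝ) :=
    {x | ∀ j : Fin k, (∑ m : Fin k, if (j : ℕ) ≤ (m : ℕ) then x m else 0) < 0} with hB'
  set C' : Set (Fin N → ℝ) :=
    {y | ∀ d : Fin (N+1), 0 ≤ ∑ m : Fin N, if (m : ℕ) < (d : ℕ) then y m else 0} with hC'
  set D' : Set (Fin N → ℝ) :=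
    {y | (∑ m : Fin N, if (m : ℕ) < i then y m else 0) ∈ A} with hD'
  have hsummeas : ∀ (M : ℕ) (p : ℕ → Prop) [DecidablePred p],
      Measurable (fun y : Fin M → ℝ => ∑ m : Fin M, if p m then y m else 0) := by
    intro M p _
    refine Finset.measurable_sum _ (fun m _ => ?_)
    by_cases h : p m
    · simpa [h] using measurable_pi_apply m
    · simp [h]
  have hB'm : MeasurableSet B' := by
    have : B' = ⋂ j : Fin k,
        (fun x : Fin k → ℝ => ∑ m : Fin k, if (j : ℕ) ≤ (m : ℕ) then x m else 0) ⁻¹'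
          Set.Iio 0 := by
      ext x; simp [hB']
    rw [this]
    exact MeasurableSet.iInter fun j => (hsummeas k _) measurableSet_Iio
  have hC'm : MeasurableSet C' := by
    have : C' = ⋂ d : Fin (N+1),
        (fun y : Fin N → ℝ => ∑ m : Fin N, if (m : ℕ) < (d : ℕ) then y m else 0) ⁻¹'
          Set.Ici 0 := by
      ext y; simp [hC']
    rw [this]
    exact MeasurableSet.iInter fun d =>
      (hsummeas N (fun m => m < (d : ℕ))) measurableSet_Ici
  have hD'm : MeasurableSet D' :=
    (hsummeas N (fun m => m < i)) hA
  -- sum identities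
  have I1 : ∀ (ω : Ω) (j : Fin k),
      (∑ m : Fin k, if (j : ℕ) ≤ (m : ℕ) then X m ω else 0) = S k ω - S j ω := by
    intro ω j
    rw [Fin.sum_univ_eq_sum_range (fun m => if (j : ℕ) ≤ m then X m ω else 0) k,
      ← Finset.sum_filter]
    rw [hsub ω j k (le_of_lt j.isLt)]
    congr 1
    ext m
    simp only [Finset.mem_filter, Finset.mem_range, Finset.mem_Ico]
    omega
  have I2 : ∀ (ω : Ω) (d : ℕ), d ≤ N →
      (∑ m : Fin N, if (m : ℕ) < d then X (k + m) ω else 0) = S (k + d) ω - S k ω := by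
    intro ω d hd
    rw [Fin.sum_univ_eq_sum_range (fun m => if m < d then X (k + m) ω else 0) N,
      ← Finset.sum_filter]
    rw [hsub ω k (k + d) (by omega), Finset.sum_Ico_eq_sum_range]
    have hfil : Finset.filter (fun m => m < d) (Finset.range N) = Finset.range d := by
      ext m
      simp only [Finset.mem_filter, Finset.mem_range]
      omega
    rw [hfil]
    simp
  have I0 : ∀ (ω : Ω) (d : ℕ), d ≤ N →
      (∑ m : Fin N, if (m : ℕ) < d then X m ω else 0) = S d ω := by
    intro ω d hd
    rw [Fin.sum_univ_eq_sum_range (fun m => if m < d then X m ω else 0) N,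
      ← Finset.sum_filter]
    have hfil : Finset.filter (fun m => m < d) (Finset.range N) = Finset.range d := by
      ext m
      simp only [Finset.mem_filter, Finset.mem_range]
      omega
    rw [hfil, hS]
  -- membership characterizations
  have memB : ∀ ω, g1 ω ∈ B' ↔ ∀ j < k, S k ω < S j ω := by
    intro ω
    have h1 : g1 ω ∈ B' ↔ ∀ j : Fin k, S k ω - S (j : ℕ) ω < 0 := by
      simp only [hB', Set.mem_setOf_eq, hg1]
      exact forall_congr' fun j => by rw [I1 ω j]
    rw [h1]
    constructor
    · intro h j hj
      have h2 : S k ω - S j ω < 0 := h ⟨j, hj⟩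
      linarith
    · intro h j
      have := h j j.isLt
      linarith
  have memC2 : ∀ ω, g2 ω ∈ C' ↔ ∀ d ≤ N, S k ω ≤ S (k + d) ω := by
    intro ω
    have h1 : g2 ω ∈ C' ↔ ∀ d : Fin (N+1), 0 ≤ S (k + (d : ℕ)) ω - S k ω := by
      simp only [hC', Set.mem_setOf_eq, hg2]
      exact forall_congr' fun d => by rw [I2 ω d (by omega)]
    rw [h1]
    constructor
    · intro h d hd
      have h2 : 0 ≤ S (k + d) ω - S k ω := h ⟨d, by omega⟩
      linarith
    · intro h d
      have := h (d : ℕ) (by omega)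
      linarith
  have memD2 : ∀ ω, g2 ω ∈ D' ↔ S (k + i) ω - S k ω ∈ A := by
    intro ω
    simp only [hD', Set.mem_setOf_eq, hg2]
    rw [I2 ω i hiN]
  have memC0 : ∀ ω, g0 ω ∈ C' ↔ 0 ≤ L N ω := by
    intro ω
    have h1 : g0 ω ∈ C' ↔ ∀ d : Fin (N+1), 0 ≤ S (d : ℕ) ω := by
      simp only [hC', Set.mem_setOf_eq, hg0]
      exact forall_congr' fun d => by rw [I0 ω d (by omega)]
    rw [h1, hL, Finset.le_inf'_iff]
    constructor
    · intro h j hj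
      have hj' : j ≤ N := by have := Finset.mem_range.mp hj; omega
      exact h ⟨j, by omega⟩
    · intro h d
      exact h (d : ℕ) (Finset.mem_range.mpr (by omega))
  have memD0 : ∀ ω, g0 ω ∈ D' ↔ S i ω ∈ A := by
    intro ω
    simp only [hD', Set.mem_setOf_eq, hg0]
    rw [I0 ω i hiN]
  -- characterization of τ = k
  have hτk : ∀ ω, τ n ω = k ↔
      ((∀ j < k, S k ω < S j ω) ∧ (∀ d ≤ N, S k ω ≤ S (k + d) ω)) := by
    intro ω
    set M : Set ℕ := {i | i ≤ n ∧ S i ω = L n ω} with hM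
    have hLdef : ∀ j ≤ n, L n ω ≤ S j ω := by
      intro j hj
      rw [hL]
      exact Finset.inf'_le _ (Finset.mem_range.mpr (by omega))
    obtain ⟨j0, hj0mem, hj0⟩ :=
      Finset.exists_mem_eq_inf' (Finset.nonempty_range_add_one (n := n)) (fun j => S j ω)
    have hj0n : j0 ≤ n := by
      have := Finset.mem_range.mp hj0mem; omega
    have hLj0 : L n ω = S j0 ω := by rw [hL]; exact hj0
    have hne : M.Nonempty := ⟨j0, hj0n, hLj0.symm⟩
    have hτS : τ n ω = sInf M := hτ n ω
    constructor
    · intro h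
      have hsinf : sInf M = k := by rw [← hτS]; exact h
      have hkmem : k ∈ M := hsinf ▸ Nat.sInf_mem hne
      have hkS : S k ω = L n ω := hkmem.2
      constructor
      · intro j hj
        by_contra hc
        push_neg at hc
        have hjL : S j ω = L n ω :=
          le_antisymm (le_trans hc (le_of_eq hkS)) (hLdef j (by omega))
        have hjM : j ∈ M := ⟨by omega, hjL⟩
        have := Nat.sInf_le hjM
        omega
      · intro d hd
        rw [hkS]
        exact hLdef (k + d) (by omega)
    · rintro ⟨h1, h2⟩
      have hkS : S k ω = L n ω := by
        refine le_antisymm ?_ (hLdef k hkn)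
        rw [hLj0]
        rcases lt_or_ge j0 k with hlt | hge
        · exfalso
          have := h1 j0 hlt
          have := hLdef k hkn
          rw [hLj0] at this
          linarith
        · have hj0eq : j0 = k + (j0 - k) := by omega
          rw [hj0eq]
          exact h2 _ (by omega)
      have hkM : k ∈ M := ⟨hkn, hkS⟩
      have hle := Nat.sInf_le hkM
      have hmem := Nat.sInf_mem (⟨k, hkM⟩ : M.Nonempty)
      rw [hτS]
      rcases Nat.lt_or_ge (sInf M) k with hlt | hge
      · exfalso
        have h1' := h1 _ hlt
        have h2' := hmem.2
        rw [hkS] at h1'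
        rw [h2'] at h1'
        exact lt_irrefl _ h1'
      · omega
  -- event identities
  have hEτ : {ω | τ n ω = k} = g1 ⁻¹' B' ∩ g2 ⁻¹' C' := by
    ext ω
    simp only [Set.mem_setOf_eq, Set.mem_inter_iff, Set.mem_preimage, hτk ω, memB ω, memC2 ω]
  have hLHSset : {ω | S (τ n ω + i) ω - S (τ n ω) ω ∈ A ∧ τ n ω = k}
      = g1 ⁻¹' B' ∩ g2 ⁻¹' (D' ∩ C') := by
    ext ω
    simp only [Set.mem_setOf_eq, Set.mem_inter_iff, Set.mem_preimage, memB ω, memC2 ω, memD2 ω]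
    constructor
    · rintro ⟨hAmem, hτeq⟩
      obtain ⟨h1, h2⟩ := (hτk ω).1 hτeq
      rw [hτeq] at hAmem
      exact ⟨h1, hAmem, h2⟩
    · rintro ⟨h1, hAmem, h2⟩
      have hτeq : τ n ω = k := (hτk ω).2 ⟨h1, h2⟩
      rw [hτeq]
      exact ⟨hAmem, rfl⟩
  have hC0set : g0 ⁻¹' C' = {ω | 0 ≤ L N ω} := by
    ext ω; exact memC0 ω
  have hD0set : g0 ⁻¹' D' = {ω | S i ω ∈ A} := by
    ext ω; exact memD0 ω
  -- independence of g1 and g2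
  have hIndep : IndepFun g1 g2 ℙ := by
    have hdisj : Disjoint (Finset.range k) (Finset.Ico k n) := by
      rw [Finset.disjoint_left]
      intro a ha hb
      rw [Finset.mem_range] at ha
      rw [Finset.mem_Ico] at hb
      omega
    have h := hindep.indepFun_finset (Finset.range k) (Finset.Ico k n) hdisj hmeas
    have hφ1 : Measurable (fun (v : (m : (Finset.range k : Finset ℕ)) → ℝ) (j : Fin k) =>
        v ⟨(j : ℕ), Finset.mem_range.mpr j.isLt⟩) :=
      measurable_pi_lambda _ fun j => measurable_pi_apply _
    have hφ2 : Measurable (fun (v : (m : (Finset.Ico k n : Finset ℕ)) → ℝ) (j : Fin N) =>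
        v ⟨k + (j : ℕ), Finset.mem_Ico.mpr ⟨by omega, by omega⟩⟩) :=
      measurable_pi_lambda _ fun j => measurable_pi_apply _
    exact h.comp hφ1 hφ2
  -- equal laws of g2 and g0
  have hmap2 : Measure.map g2 ℙ = Measure.pi (fun _ : Fin N => Measure.map (X 0) ℙ) :=
    map_tuple_pi X hmeas hindep hident N (fun m => k + m) (fun a b h => Nat.add_left_cancel h)
  have hmap0 : Measure.map g0 ℙ = Measure.pi (fun _ : Fin N => Measure.map (X 0) ℙ) :=
    map_tuple_pi X hmeas hindep hident N id (fun a b h => h)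
  have hlaw : ∀ (s : Set (Fin N → ℝ)), MeasurableSet s → ℙ (g2 ⁻¹' s) = ℙ (g0 ⁻¹' s) := by
    intro s hs
    rw [← Measure.map_apply hg2m hs, ← Measure.map_apply hg0m hs, hmap2, hmap0]
  -- measure computations
  have step1 : ℙ (g1 ⁻¹' B' ∩ g2 ⁻¹' (D' ∩ C')) = ℙ (g1 ⁻¹' B') * ℙ (g2 ⁻¹' (D' ∩ C')) :=
    hIndep.measure_inter_preimage_eq_mul _ _ hB'm (hD'm.inter hC'm)
  have step2 : ℙ (g1 ⁻¹' B' ∩ g2 ⁻¹' C') = ℙ (g1 ⁻¹' B') * ℙ (g2 ⁻¹' C') :=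
    hIndep.measure_inter_preimage_eq_mul _ _ hB'm hC'm
  have step3 : ℙ (g2 ⁻¹' (D' ∩ C')) = ℙ (g0 ⁻¹' (D' ∩ C')) := hlaw _ (hD'm.inter hC'm)
  have step4 : ℙ (g2 ⁻¹' C') = ℙ (g0 ⁻¹' C') := hlaw _ hC'm
  -- conditional probability
  have hcondset : {ω | 0 ≤ L (n - k) ω} = g0 ⁻¹' C' := by rw [hC0set]
  have hC0meas : MeasurableSet (g0 ⁻¹' C') := hg0m hC'm
  have hcond : (ℙ[|{ω | 0 ≤ L (n - k) ω}]) {ω | S i ω ∈ A}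
      = (ℙ (g0 ⁻¹' C'))⁻¹ * ℙ (g0 ⁻¹' C' ∩ g0 ⁻¹' D') := by
    rw [hcondset, ← hD0set]
    exact cond_apply hC0meas ℙ _
  have ha0 : ℙ (g0 ⁻¹' C') ≠ 0 := by
    rw [← hcondset]
    exact (ne_of_gt hpos)
  have hatop : ℙ (g0 ⁻¹' C') ≠ ⊤ := measure_ne_top _ _
  rw [hLHSset, step1, step3, hEτ, step2, step4, hcond]
  rw [Set.preimage_inter, Set.inter_comm (g0 ⁻¹' D') (g0 ⁻¹' C')]
  set a := ℙ (g0 ⁻¹' C')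
  set b := ℙ (g0 ⁻¹' C' ∩ g0 ⁻¹' D')
  set c := ℙ (g1 ⁻¹' B')
  rw [show a⁻¹ * b * (c * a) = (a⁻¹ * a) * (c * b) by ring,
    ENNReal.inv_mul_cancel ha0 hatop, one_mul]
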